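/- For any zipper S = {S_1,…,S_m} with vertices (z_0,…,z_m) and signature ε, and any partition 0 = x_0 < x_1 < … < x_m = 1, there exists a unique continuous map γ : [0,1] → K(S) such that γ(x_i) = z_i for all i and S_i ∘ γ = γ ∘ T_i for all i, where T_i(t) = x_{i-1+ε_i}(1-t) + x_{i-ε_i}·t; moreover γ is Hölder continuous. -/

import Mathlib

open Set

/-- `K` is the attractor (invariant nonempty compact set) of the system `S`. -/
def IsAttractor {X : Type*} [MetricSpace X] {m : ℕ} (S : Fin m → X → X) (K : Set X) : Prop :=
  K.Nonempty ∧ IsCompact K ∧ K = ⋃ i, S i '' K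

/-- `S` is a zipper with vertices `z 0, …, z m` and signature `ε ∈ {0,1}^m`:
a system of injective contractions with `S j (z 0) = z (j + ε j)` and
`S j (z m) = z (j + 1 - ε j)` (0-based indexing of the maps). -/
def IsZipper {X : Type*} [MetricSpace X] {m : ℕ} (S : Fin m → X → X)
    (z : ℕ → X) (ε : Fin m → ℕ) : Prop :=
  (∀ j, ε j ≤ 1) ∧
  (∀ j, Function.Injective (S j)) ∧
  (∀ j, ∃ r : NNReal, ContractingWith r (S j)) ∧
  (∀ j : Fin m, S j (z 0) = z (j.val + ε j)) ∧
  (∀ j : Fin m, S j (z m) = z (j.val + 1 - ε j))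

/-- The affine maps `T i` of the zipper `S_{P,ε}` on `[0,1]` associated to a
partition `x` and signature `ε`. -/
def zipT {m : ℕ} (x : ℕ → ℝ) (ε : Fin m → ℕ) (i : Fin m) : ℝ → ℝ :=
  fun t => x (i.val + ε i) * (1 - t) + x (i.val + 1 - ε i) * t
noncomputable def zidx (m : ℕ) (x : ℕ → ℝ) (s : ℝ) : ℕ := sSup {i | i < m ∧ x i ≤ s}

noncomputable def ztau {m : ℕ} (x : ℕ → ℝ) (ε : Fin m → ℕ) (i : Fin m) (s : ℝ) : ℝ :=
  (s - x (i.val + ε i)) / (x (i.val + 1 - ε i) - x (i.val + ε i))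

noncomputable def zPhi {X : Type*} [MetricSpace X] {m : ℕ} (hm : 0 < m) (S : Fin m → X → X)
    (x : ℕ → ℝ) (ε : Fin m → ℕ) (f : ℝ → X) : ℝ → X :=
  fun s => S ⟨zidx m x s % m, Nat.mod_lt _ hm⟩ (f (ztau x ε ⟨zidx m x s % m, Nat.mod_lt _ hm⟩ s))

open Filter Topology

set_option maxHeartbeats 4000000

/-- Existence, uniqueness and Hölder continuity of the linear parametrization
of a zipper. -/
theorem stmt4 {X : Type*} [MetricSpace X] [CompleteSpace X] {m : ℕ} (hm : 0 < m)
    (S : Fin m → X → X) (z : ℕ → X) (ε : Fin m → ℕ) (hzip : IsZipper S z ε)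
    (K : Set X) (hK : IsAttractor S K)
    (x : ℕ → ℝ) (hx0 : x 0 = 0) (hxm : x m = 1) (hmono : ∀ i < m, x i < x (i + 1)) :
    ∃ γ : ℝ → X,
      (ContinuousOn γ (Icc 0 1) ∧ MapsTo γ (Icc 0 1) K ∧
        (∀ i ≤ m, γ (x i) = z i) ∧
        (∀ i : Fin m, ∀ t ∈ Icc (0:ℝ) 1, S i (γ t) = γ (zipT x ε i t))) ∧
      (∀ γ' : ℝ → X,
        (ContinuousOn γ' (Icc 0 1) ∧ MapsTo γ' (Icc 0 1) K ∧
          (∀ i ≤ m, γ' (x i) = z i) ∧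
          (∀ i : Fin m, ∀ t ∈ Icc (0:ℝ) 1, S i (γ' t) = γ' (zipT x ε i t))) →
        EqOn γ γ' (Icc 0 1)) ∧
      (∃ C r : NNReal, 0 < r ∧ HolderOnWith C r γ (Icc 0 1)) := by
  classical
  obtain ⟨hε, hinj, hcon, hz0, hzm⟩ := hzip
  obtain ⟨hKne, hKcomp, hKinv⟩ := hK
  -- monotonicity
  have hxlt : ∀ i j : ℕ, i < j → j ≤ m → x i < x j := by
    intro i j hij hjm
    induction j with
    | zero => omega
    | succ k ih =>
      rcases Nat.lt_succ_iff_lt_or_eq.mp hij with h | h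
      · exact lt_trans (ih h (by omega)) (hmono k (by omega))
      · subst h; exact hmono i (by omega)
  have hxle : ∀ i j : ℕ, i ≤ j → j ≤ m → x i ≤ x j := by
    intro i j hij hjm
    rcases eq_or_lt_of_le hij with h | h
    · subst h; rfl
    · exact (hxlt i j h hjm).le
  have hx01 : ∀ i ≤ m, 0 ≤ x i ∧ x i ≤ 1 := by
    intro i hi
    constructor
    · rw [← hx0]; exact hxle 0 i (Nat.zero_le _) hi
    · rw [← hxm]; exact hxle i m hi le_rfl
  -- δ
  have hmne : (Finset.range m).Nonempty := ⟨0, Finset.mem_range.2 hm⟩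
  set δ : ℝ := min (1/2) ((Finset.range m).inf' hmne fun i => x (i+1) - x i) with hδdef
  have hδlen : ∀ i < m, δ ≤ x (i+1) - x i := fun i hi =>
    (min_le_right _ _).trans (Finset.inf'_le _ (Finset.mem_range.2 hi))
  have hδpos : 0 < δ := lt_min (by norm_num)
    ((Finset.lt_inf'_iff _).2 fun i hi => sub_pos.2 (hmono i (Finset.mem_range.1 hi)))
  have hδhalf : δ ≤ 1/2 := min_le_left _ _
  -- zidx spec
  have hidx_spec : ∀ s : ℝ, 0 ≤ s → s ≤ 1 →
      zidx m x s < m ∧ x (zidx m x s) ≤ s ∧ s ≤ x (zidx m x s + 1) ∧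
      ∀ i < m, x i ≤ s → i ≤ zidx m x s := by
    intro s hs0 hs1
    have hbdd : BddAbove {i | i < m ∧ x i ≤ s} := ⟨m, fun i hi => le_of_lt hi.1⟩
    have hne : {i | i < m ∧ x i ≤ s}.Nonempty := ⟨0, hm, by rw [hx0]; exact hs0⟩
    have hmem : zidx m x s < m ∧ x (zidx m x s) ≤ s := Nat.sSup_mem hne hbdd
    have hmax : ∀ i < m, x i ≤ s → i ≤ zidx m x s := fun i h1 h2 => le_csSup hbdd ⟨h1, h2⟩
    refine ⟨hmem.1, hmem.2, ?_, hmax⟩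
    by_cases h : zidx m x s + 1 = m
    · rw [h, hxm]; exact hs1
    · have hlt : zidx m x s + 1 < m := by have := hmem.1; omega
      by_contra hc
      push_neg at hc
      exact absurd (hmax _ hlt hc.le) (by omega)
  have hidx_xj : ∀ j < m, zidx m x (x j) = j := by
    intro j hj
    obtain ⟨h1, h2, h3, h4⟩ := hidx_spec (x j) (hx01 j hj.le).1 (hx01 j hj.le).2
    have hle : zidx m x (x j) ≤ j := by
      by_contra hc
      push_neg at hc
      exact absurd h2 (not_le.2 (hxlt j _ hc h1.le))
    exact le_antisymm hle (h4 j hj le_rfl)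
  have hidx0 : zidx m x 0 = 0 := by rw [← hx0]; exact hidx_xj 0 hm
  have hidx1 : zidx m x 1 = m - 1 := by
    obtain ⟨h1, h2, h3, h4⟩ := hidx_spec 1 zero_le_one le_rfl
    have := h4 (m-1) (by omega) (by rw [← hxm]; exact hxle (m-1) m (by omega) le_rfl)
    omega
  -- ε cases
  have hεcase : ∀ i : Fin m, (i.val + ε i = i.val ∧ i.val + 1 - ε i = i.val + 1) ∨
      (i.val + ε i = i.val + 1 ∧ i.val + 1 - ε i = i.val) := by
    intro i
    rcases Nat.le_one_iff_eq_zero_or_eq_one.1 (hε i) with h | h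
    · left; omega
    · right; omega
  have hlenpos : ∀ i : Fin m, 0 < x (i.val+1) - x i.val := fun i => sub_pos.2 (hmono i.val i.isLt)
  -- denominator
  have hden : ∀ i : Fin m, x (i.val + 1 - ε i) - x (i.val + ε i) ≠ 0 ∧
      |x (i.val + 1 - ε i) - x (i.val + ε i)| = x (i.val+1) - x i.val := by
    intro i
    rcases hεcase i with ⟨h1, h2⟩ | ⟨h1, h2⟩ <;> rw [h1, h2]
    · exact ⟨ne_of_gt (hlenpos i), abs_of_pos (hlenpos i)⟩
    · constructor
      · exact ne_of_lt (by linarith [hlenpos i])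
      · rw [abs_of_neg (by linarith [hlenpos i])]; ring
  have hzipT_tau : ∀ (i : Fin m) (s : ℝ), zipT x ε i (ztau x ε i s) = s := by
    intro i s
    have h := (hden i).1
    simp only [zipT, ztau]
    field_simp
    ring
  have htau_zipT : ∀ (i : Fin m) (t : ℝ), ztau x ε i (zipT x ε i t) = t := by
    intro i t
    have h := (hden i).1
    simp only [zipT, ztau]
    field_simp
    ring
  have htau_mem : ∀ (i : Fin m) (s : ℝ), x i.val ≤ s → s ≤ x (i.val+1) →
      ztau x ε i s ∈ Icc (0:ℝ) 1 := by
    intro i s h1 h2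
    have hl := hlenpos i
    rcases hεcase i with ⟨ha, hb⟩ | ⟨ha, hb⟩ <;> simp only [ztau, ha, hb] <;> constructor
    · exact div_nonneg (by linarith) (by linarith)
    · rw [div_le_one (by linarith)]; linarith
    · rw [le_div_iff_of_neg (by linarith)]; linarith
    · rw [div_le_iff_of_neg (by linarith)]; linarith
  have htau_sub : ∀ (i : Fin m) (s t : ℝ),
      |ztau x ε i s - ztau x ε i t| = |s - t| / (x (i.val+1) - x i.val) := by
    intro i s t
    simp only [ztau, div_sub_div_same]
    rw [abs_div, (hden i).2]
    congr 1
    congr 1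
    ring
  have htau_diff_le : ∀ (i : Fin m) (s t : ℝ) (c : ℝ), 0 ≤ c → |s - t| ≤ δ * c →
      |ztau x ε i s - ztau x ε i t| ≤ c := by
    intro i s t c hc h
    rw [htau_sub]
    rw [div_le_iff₀ (hlenpos i)]
    calc |s - t| ≤ δ * c := h
    _ ≤ (x (i.val+1) - x i.val) * c := mul_le_mul_of_nonneg_right (hδlen i.val i.isLt) hc
    _ = c * (x (i.val+1) - x i.val) := mul_comm _ _
  have hzipT0 : ∀ i : Fin m, zipT x ε i 0 = x (i.val + ε i) := by intro i; simp [zipT]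
  have hzipT1 : ∀ i : Fin m, zipT x ε i 1 = x (i.val + 1 - ε i) := by intro i; simp [zipT]
  have htau_a : ∀ i : Fin m, ztau x ε i (x (i.val + ε i)) = 0 := by
    intro i; simp [ztau]
  have htau_b : ∀ i : Fin m, ztau x ε i (x (i.val + 1 - ε i)) = 1 := by
    intro i; simp only [ztau]; exact div_self (hden i).1
  -- basic consequences
  have hSK : ∀ (i : Fin m), ∀ a ∈ K, S i a ∈ K := by
    intro i a ha
    have h : S i a ∈ ⋃ i, S i '' K := mem_iUnion.2 ⟨i, mem_image_of_mem _ ha⟩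
    rwa [← hKinv] at h
  have hScont : ∀ i : Fin m, Continuous (S i) := fun i => (hcon i).choose_spec.2.continuous
  have hneX : Nonempty X := ⟨hKne.choose⟩
  -- common contraction ratio (real)
  have hneF : (Finset.univ : Finset (Fin m)).Nonempty := ⟨⟨0, hm⟩, Finset.mem_univ _⟩
  obtain ⟨r, hr0, hr1, hdistS⟩ : ∃ r : ℝ, 1/2 ≤ r ∧ r < 1 ∧
      ∀ (i : Fin m) (a b : X), dist (S i a) (S i b) ≤ r * dist a b := by
    choose ρ hρ using hcon
    refine ⟨max (Finset.univ.sup' hneF fun i => ((ρ i : ℝ))) (1/2), le_max_right _ _, ?_, ?_⟩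
    · rw [max_lt_iff]
      refine ⟨(Finset.sup'_lt_iff hneF).2 fun i _ => ?_, by norm_num⟩
      exact_mod_cast (hρ i).1
    · intro i a b
      calc dist (S i a) (S i b) ≤ (ρ i : ℝ) * dist a b := (hρ i).2.dist_le_mul a b
      _ ≤ _ := mul_le_mul_of_nonneg_right
          (le_trans (Finset.le_sup' (f := fun i => ((ρ i : ℝ))) (Finset.mem_univ i)) (le_max_left _ _))
          dist_nonneg
  have hrpos : 0 < r := lt_of_lt_of_le (by norm_num) hr0
  -- fixed points of contractions mapping K to K lie in K
  have hfixmem : ∀ (g : X → X) (c : NNReal), ContractingWith c g → (∀ a ∈ K, g a ∈ K) →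
      ∀ w, g w = w → w ∈ K := by
    intro g c hg hgK w hw
    obtain ⟨a, ha⟩ := hKne
    have hiter : ∀ n, g^[n] a ∈ K := by
      intro n; induction n with
      | zero => simpa using ha
      | succ k ih => rw [Function.iterate_succ_apply']; exact hgK _ ih
    have hlim := hg.tendsto_iterate_fixedPoint a
    have hwfix : w = ContractingWith.fixedPoint g hg := hg.fixedPoint_unique hw
    rw [hwfix]
    exact hKcomp.isClosed.mem_of_tendsto hlim (Filter.Eventually.of_forall hiter)
  -- z 0 and z m belong to K
  have hi0 : (0:ℕ) < m := hm
  set i0 : Fin m := ⟨0, hm⟩ with hi0def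
  set il : Fin m := ⟨m-1, by omega⟩ with hildef
  have hil1 : (il : ℕ) + 1 = m := by simp [hildef]; omega
  have hzmem : z 0 ∈ K ∧ z m ∈ K := by
    have h00 := hz0 i0; have h0m := hzm i0
    have hl0 := hz0 il; have hlm := hzm il
    have hi0v : (i0:ℕ) = 0 := rfl
    have hilv : (il:ℕ) = m - 1 := rfl
    rw [hi0v] at h00 h0m
    rw [hilv] at hl0 hlm
    rcases Nat.le_one_iff_eq_zero_or_eq_one.1 (hε i0) with he0 | he0 <;>
      rcases Nat.le_one_iff_eq_zero_or_eq_one.1 (hε il) with hel | hel <;>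
      rw [he0] at h00 h0m <;> rw [hel] at hl0 hlm <;>
      simp only [Nat.add_zero, Nat.zero_add, Nat.add_sub_cancel, Nat.sub_zero,
        show m - 1 + 1 = m by omega] at h00 h0m hl0 hlm
    · exact ⟨hfixmem _ _ (hcon i0).choose_spec (hSK i0) _ h00,
        hfixmem _ _ (hcon il).choose_spec (hSK il) _ hlm⟩
    · have hz0K : z 0 ∈ K := hfixmem _ _ (hcon i0).choose_spec (hSK i0) _ h00
      exact ⟨hz0K, hl0 ▸ hSK il _ hz0K⟩
    · have hzmK : z m ∈ K := hfixmem _ _ (hcon il).choose_spec (hSK il) _ hlm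
      exact ⟨h0m ▸ hSK i0 _ hzmK, hzmK⟩
    · obtain ⟨c0, hc0⟩ := hcon i0
      obtain ⟨cl, hcl⟩ := hcon il
      have hcomp : ContractingWith (c0 * cl) (S i0 ∘ S il) := by
        constructor
        · calc c0 * cl ≤ c0 * 1 := mul_le_mul_of_nonneg_left hcl.1.le zero_le
          _ = c0 := mul_one _
          _ < 1 := hc0.1
        · exact hc0.2.comp hcl.2
      have hz0K : z 0 ∈ K := by
        refine hfixmem _ _ hcomp (fun a ha => hSK i0 _ (hSK il _ ha)) _ ?_
        show S i0 (S il (z 0)) = z 0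
        rw [hl0, h0m]
      exact ⟨hz0K, hl0 ▸ hSK il _ hz0K⟩
  -- the iteration
  set f0 : ℝ → X := fun s => if s ≤ 0 then z 0 else z m with hf0def
  set F : (ℝ → X) → ℝ → X := zPhi hm S x ε with hFdef0
  set g : ℕ → ℝ → X := fun n => F^[n] f0 with hgdef
  have hFdef : ∀ (f : ℝ → X) (s : ℝ) (h : zidx m x s < m),
      F f s = S ⟨zidx m x s, h⟩ (f (ztau x ε ⟨zidx m x s, h⟩ s)) := by
    intro f s h
    simp only [hFdef0, zPhi]
    have he : (⟨zidx m x s % m, Nat.mod_lt _ hm⟩ : Fin m) = ⟨zidx m x s, h⟩ :=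
      Fin.ext (Nat.mod_eq_of_lt h)
    rw [he]
  have hgsucc : ∀ (k : ℕ) (s : ℝ), g (k+1) s = F (g k) s := by
    intro k s
    simp only [hgdef]
    rw [Function.iterate_succ_apply']
  have hPres : ∀ f : ℝ → X, (f 0 = z 0 ∧ f 1 = z m ∧ ∀ s ∈ Icc (0:ℝ) 1, f s ∈ K) →
      (F f 0 = z 0 ∧ F f 1 = z m ∧ ∀ s ∈ Icc (0:ℝ) 1, F f s ∈ K) := by
    rintro f ⟨hf0, hf1, hfK⟩
    have h0lt : zidx m x 0 < m := by rw [hidx0]; exact hm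
    have h1lt : zidx m x 1 < m := by rw [hidx1]; omega
    have hfin0 : (⟨zidx m x 0, h0lt⟩ : Fin m) = i0 := Fin.ext (by simpa using hidx0)
    have hfin1 : (⟨zidx m x 1, h1lt⟩ : Fin m) = il := Fin.ext (by simpa using hidx1)
    refine ⟨?_, ?_, ?_⟩
    · rw [hFdef f 0 h0lt, hfin0]
      have hzz := hz0 i0
      have hzz' := hzm i0
      have hi0v : (i0:ℕ) = 0 := rfl
      rw [hi0v] at hzz hzz'
      rcases Nat.le_one_iff_eq_zero_or_eq_one.1 (hε i0) with he | he
      · have : (0:ℝ) = x ((i0:ℕ) + ε i0) := by rw [hi0v, he, hx0]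
        rw [this, htau_a i0, hf0, hzz, he]
      · have : (0:ℝ) = x ((i0:ℕ) + 1 - ε i0) := by rw [hi0v, he, hx0]
        rw [this, htau_b i0, hf1, hzz', he]
    · rw [hFdef f 1 h1lt, hfin1]
      have hzz := hz0 il
      have hzz' := hzm il
      have hilv : (il:ℕ) = m - 1 := rfl
      rcases Nat.le_one_iff_eq_zero_or_eq_one.1 (hε il) with he | he
      · have : (1:ℝ) = x ((il:ℕ) + 1 - ε il) := by
          rw [hilv, he, Nat.sub_zero, show m - 1 + 1 = m by omega, hxm]
        rw [this, htau_b il, hf1, hzz', hilv, he, Nat.sub_zero,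
          show m - 1 + 1 = m by omega]
      · have : (1:ℝ) = x ((il:ℕ) + ε il) := by
          rw [hilv, he, show m - 1 + 1 = m by omega, hxm]
        rw [this, htau_a il, hf0, hzz, hilv, he, show m - 1 + 1 = m by omega]
    · intro s hs
      obtain ⟨h1, h2, h3, _⟩ := hidx_spec s hs.1 hs.2
      rw [hFdef f s h1]
      exact hSK _ _ (hfK _ (htau_mem ⟨zidx m x s, h1⟩ s h2 h3))
  have hgood : ∀ n : ℕ, g n 0 = z 0 ∧ g n 1 = z m ∧ ∀ s ∈ Icc (0:ℝ) 1, g n s ∈ K := by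
    intro n
    induction n with
    | zero =>
      refine ⟨by simp [hgdef, hf0def], by simp [hgdef, hf0def], ?_⟩
      intro s _
      simp only [hgdef, Function.iterate_zero, id_eq, hf0def]
      split <;> [exact hzmem.1; exact hzmem.2]
    | succ k ih =>
      have := hPres (g k) ih
      exact ⟨by rw [hgsucc]; exact this.1, by rw [hgsucc]; exact this.2.1,
        fun s hs => by rw [hgsucc]; exact this.2.2 s hs⟩
  set D : ℝ := Metric.diam K with hDdef
  have hD0 : 0 ≤ D := Metric.diam_nonneg
  have hDdist : ∀ a ∈ K, ∀ b ∈ K, dist a b ≤ D := fun a ha b hb =>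
    Metric.dist_le_diam_of_mem hKcomp.isBounded ha hb
  have hgdist : ∀ n, ∀ s ∈ Icc (0:ℝ) 1, dist (g n s) (g (n+1) s) ≤ D * r ^ n := by
    intro n
    induction n with
    | zero =>
      intro s hs
      simpa using hDdist _ ((hgood 0).2.2 s hs) _ ((hgood 1).2.2 s hs)
    | succ k ih =>
      intro s hs
      obtain ⟨h1, h2, h3, _⟩ := hidx_spec s hs.1 hs.2
      have hmem := htau_mem ⟨zidx m x s, h1⟩ s h2 h3
      rw [hgsucc, hgsucc, hFdef _ s h1, hFdef _ s h1]
      calc dist (S ⟨zidx m x s, h1⟩ (g k (ztau x ε ⟨zidx m x s, h1⟩ s)))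
            (S ⟨zidx m x s, h1⟩ (g (k+1) (ztau x ε ⟨zidx m x s, h1⟩ s)))
          ≤ r * dist (g k (ztau x ε ⟨zidx m x s, h1⟩ s)) (g (k+1) (ztau x ε ⟨zidx m x s, h1⟩ s)) :=
            hdistS _ _ _
        _ ≤ r * (D * r ^ k) := mul_le_mul_of_nonneg_left (ih _ hmem) hrpos.le
        _ = D * r ^ (k+1) := by ring
  set γ : ℝ → X := fun s => limUnder atTop fun n => g n s with hγdef
  have htend : ∀ s ∈ Icc (0:ℝ) 1, Tendsto (fun n => g n s) atTop (𝓝 (γ s)) := by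
    intro s hs
    have hc : CauchySeq fun n => g n s :=
      cauchySeq_of_le_geometric r D hr1 (fun n => hgdist n s hs)
    obtain ⟨a, ha⟩ := cauchySeq_tendsto_of_complete hc
    simp only [hγdef]
    rw [ha.limUnder_eq]
    exact ha
  have hγK : ∀ s ∈ Icc (0:ℝ) 1, γ s ∈ K := fun s hs =>
    hKcomp.isClosed.mem_of_tendsto (htend s hs)
      (Filter.Eventually.of_forall fun n => (hgood n).2.2 s hs)
  have hγ0 : γ 0 = z 0 := by
    have h : (fun n => g n 0) = fun _ => z 0 := funext fun n => (hgood n).1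
    have := htend 0 ⟨le_rfl, zero_le_one⟩
    rw [h] at this
    exact (tendsto_nhds_unique this tendsto_const_nhds)
  have hγ1 : γ 1 = z m := by
    have h : (fun n => g n 1) = fun _ => z m := funext fun n => (hgood n).2.1
    have := htend 1 ⟨zero_le_one, le_rfl⟩
    rw [h] at this
    exact (tendsto_nhds_unique this tendsto_const_nhds)
  have hγfix : ∀ s : ℝ, 0 ≤ s → s ≤ 1 → ∀ h : zidx m x s < m,
      γ s = S ⟨zidx m x s, h⟩ (γ (ztau x ε ⟨zidx m x s, h⟩ s)) := by
    intro s hs0 hs1 h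
    obtain ⟨_, h2, h3, _⟩ := hidx_spec s hs0 hs1
    have hmem := htau_mem ⟨zidx m x s, h⟩ s h2 h3
    have ht1 : Tendsto (fun n => g (n+1) s) atTop (𝓝 (γ s)) :=
      (htend s ⟨hs0, hs1⟩).comp (tendsto_add_atTop_nat 1)
    have ht2 : Tendsto (fun n => g (n+1) s) atTop
        (𝓝 (S ⟨zidx m x s, h⟩ (γ (ztau x ε ⟨zidx m x s, h⟩ s)))) := by
      have : (fun n => g (n+1) s) =
          fun n => S ⟨zidx m x s, h⟩ (g n (ztau x ε ⟨zidx m x s, h⟩ s)) :=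
        funext fun n => by rw [hgsucc, hFdef _ s h]
      rw [this]
      exact ((hScont _).tendsto _).comp (htend _ hmem)
    exact tendsto_nhds_unique ht1 ht2
  have hγx : ∀ j ≤ m, γ (x j) = z j := by
    intro j hj
    rcases Nat.eq_zero_or_pos j with h0 | h0
    · subst h0; rw [hx0, hγ0]
    rcases eq_or_lt_of_le hj with hm' | hm'
    · subst hm'; rw [hxm, hγ1]
    have hjm : j < m := hm'
    have hlt : zidx m x (x j) < m := by rw [hidx_xj j hjm]; exact hjm
    have hfin : (⟨zidx m x (x j), hlt⟩ : Fin m) = ⟨j, hjm⟩ := Fin.ext (hidx_xj j hjm)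
    have := hγfix (x j) (hx01 j hj).1 (hx01 j hj).2 hlt
    rw [hfin] at this
    rw [this]
    have hzz := hz0 ⟨j, hjm⟩
    have hzz' := hzm ⟨j, hjm⟩
    simp only [Fin.val_mk] at hzz hzz' ⊢
    rcases Nat.le_one_iff_eq_zero_or_eq_one.1 (hε ⟨j, hjm⟩) with he | he
    · have hxj : x j = x (j + ε ⟨j, hjm⟩) := by rw [he, Nat.add_zero]
      rw [show x j = x ((⟨j, hjm⟩ : Fin m).val + ε ⟨j, hjm⟩) from hxj, htau_a, hγ0, hzz, he,
        Nat.add_zero]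
    · have hxj : x j = x (j + 1 - ε ⟨j, hjm⟩) := by rw [he, Nat.add_sub_cancel]
      rw [show x j = x ((⟨j, hjm⟩ : Fin m).val + 1 - ε ⟨j, hjm⟩) from hxj, htau_b, hγ1, hzz', he,
        Nat.add_sub_cancel]
  -- forward functional equation
  have hzipT_mem : ∀ (i : Fin m), ∀ t ∈ Icc (0:ℝ) 1,
      x i.val ≤ zipT x ε i t ∧ zipT x ε i t ≤ x (i.val + 1) := by
    intro i t ht
    rcases hεcase i with ⟨ha, hb⟩ | ⟨ha, hb⟩ <;>
      simp only [zipT, ha, hb] <;> constructor <;> nlinarith [ht.1, ht.2, hlenpos i]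
  have hfuneq : ∀ (i : Fin m), ∀ t ∈ Icc (0:ℝ) 1, S i (γ t) = γ (zipT x ε i t) := by
    intro i t ht
    set u := zipT x ε i t with hu
    obtain ⟨hu1, hu2⟩ := hzipT_mem i t ht
    have hu0 : 0 ≤ u := le_trans (hx01 i.val i.isLt.le).1 hu1
    have hu1' : u ≤ 1 := le_trans hu2 (hx01 (i.val+1) i.isLt).2
    obtain ⟨h1, h2, h3, h4⟩ := hidx_spec u hu0 hu1'
    by_cases hcase : zidx m x u = i.val
    · have hfin : (⟨zidx m x u, h1⟩ : Fin m) = i := Fin.ext hcase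
      have := hγfix u hu0 hu1' h1
      rw [hfin] at this
      rw [this, hu, htau_zipT]
    · -- then u = x (i.val + 1) and i.val + 1 < m
      have hige : i.val ≤ zidx m x u := h4 i.val i.isLt hu1
      have higt : i.val < zidx m x u := lt_of_le_of_ne hige (Ne.symm hcase)
      have hle1 : x (i.val + 1) ≤ x (zidx m x u) := hxle _ _ higt h1.le
      have hueq : u = x (i.val + 1) := le_antisymm hu2 (le_trans hle1 h2)
      have hzlt : zidx m x u = i.val + 1 := by
        by_contra hc
        have : i.val + 1 < zidx m x u := by omega
        have := hxlt (i.val+1) (zidx m x u) this h1.le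
        linarith [h2, hueq.symm.le]
      have hi1m : i.val + 1 < m := by rw [← hzlt]; exact h1
      -- determine t
      rcases hεcase i with ⟨ha, hb⟩ | ⟨ha, hb⟩
      · have hteq : t = 1 := by
          have hk := hueq
          rw [hu] at hk
          simp only [zipT, ha, hb] at hk
          have hz : (x (i.val + 1) - x i.val) * (t - 1) = 0 := by linarith
          rcases mul_eq_zero.1 hz with h' | h'
          · exact absurd h' (ne_of_gt (hlenpos i))
          · linarith
        rw [hteq, hγ1, hueq]
        have hzz' := hzm i
        have : ε i = 0 := by omega
        rw [this, Nat.sub_zero] at hzz'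
        rw [hzz', hγx (i.val + 1) hi1m.le]
      · have hteq : t = 0 := by
          have hk := hueq
          rw [hu] at hk
          simp only [zipT, ha, hb] at hk
          have hz : (x (i.val + 1) - x i.val) * t = 0 := by linarith
          rcases mul_eq_zero.1 hz with h' | h'
          · exact absurd h' (ne_of_gt (hlenpos i))
          · exact h'
        rw [hteq, hγ0, hueq]
        have hzz := hz0 i
        have : ε i = 1 := by omega
        rw [this] at hzz
        rw [hzz, hγx (i.val + 1) hi1m.le]
  -- same-interval contraction estimate
  have hsame : ∀ (i : Fin m) (s t : ℝ), x i.val ≤ s → s ≤ x (i.val+1) → x i.val ≤ t →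
      t ≤ x (i.val+1) →
      dist (γ s) (γ t) ≤ r * dist (γ (ztau x ε i s)) (γ (ztau x ε i t)) := by
    intro i s t h1 h2 h3 h4
    have e1 : γ s = S i (γ (ztau x ε i s)) := by
      rw [hfuneq i _ (htau_mem i s h1 h2), hzipT_tau]
    have e2 : γ t = S i (γ (ztau x ε i t)) := by
      rw [hfuneq i _ (htau_mem i t h3 h4), hzipT_tau]
    rw [e1, e2]; exact hdistS _ _ _
  have hδ1 : δ < 1 := lt_of_le_of_lt hδhalf (by norm_num)
  have hδpow1 : ∀ n : ℕ, δ ^ n ≤ 1 := fun n => pow_le_one₀ hδpos.le hδ1.le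
  have hδpowδ : ∀ n : ℕ, δ ^ (n+1) ≤ δ := by
    intro n
    calc δ ^ (n+1) = δ * δ ^ n := by ring
    _ ≤ δ * 1 := mul_le_mul_of_nonneg_left (hδpow1 n) hδpos.le
    _ = δ := mul_one _
  -- endpoint estimate E
  have hE : ∀ n : ℕ, ∀ s : ℝ, 0 ≤ s → s ≤ 1 →
      (s ≤ δ ^ n → dist (γ s) (z 0) ≤ r ^ n * D) ∧
      (1 - δ ^ n ≤ s → dist (γ s) (z m) ≤ r ^ n * D) := by
    intro n
    induction n with
    | zero =>
      intro s hs0 hs1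
      constructor <;> intro _ <;> simp only [pow_zero, one_mul]
      · exact hDdist _ (hγK s ⟨hs0, hs1⟩) _ hzmem.1
      · exact hDdist _ (hγK s ⟨hs0, hs1⟩) _ hzmem.2
    | succ n ih =>
      intro s hs0 hs1
      constructor
      · intro hsd
        -- s ∈ [x 0, x 1]
        have hx1 : δ ≤ x 1 := by have := hδlen 0 hm; rw [hx0] at this; linarith
        have hs_le : s ≤ x 1 := le_trans hsd (le_trans (hδpowδ n) hx1)
        have hs_ge : x (i0:ℕ) ≤ s := by rw [show ((i0:ℕ)) = 0 from rfl, hx0]; exact hs0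
        have h0mem : x (i0:ℕ) ≤ (0:ℝ) ∧ (0:ℝ) ≤ x ((i0:ℕ)+1) := by
          rw [show ((i0:ℕ)) = 0 from rfl, hx0]
          exact ⟨le_rfl, (hx01 1 hm).1⟩
        have hkey := hsame i0 s 0 hs_ge hs_le h0mem.1 h0mem.2
        have habs : |ztau x ε i0 s - ztau x ε i0 0| ≤ δ ^ n := by
          apply htau_diff_le _ _ _ _ (pow_nonneg hδpos.le n)
          rw [abs_of_nonneg (by linarith : (0:ℝ) ≤ s - 0)]
          calc s - 0 = s := by ring
          _ ≤ δ ^ (n+1) := hsd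
          _ = δ * δ ^ n := by ring
        have hτmem := htau_mem i0 s hs_ge hs_le
        rcases hεcase i0 with ⟨ha, hb⟩ | ⟨ha, hb⟩
        · -- ε i0 = 0 : ztau i0 0 = 0
          have hτ0 : ztau x ε i0 (0:ℝ) = 0 := by
            have := htau_a i0
            rwa [ha, show ((i0:ℕ)) = 0 from rfl, hx0] at this
          rw [hτ0] at hkey habs
          rw [abs_le] at habs
          have := (ih _ hτmem.1 hτmem.2).1 (by linarith [habs.2])
          calc dist (γ s) (z 0) = dist (γ s) (γ 0) := by rw [hγ0]
          _ ≤ r * dist (γ (ztau x ε i0 s)) (γ 0) := hkey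
          _ = r * dist (γ (ztau x ε i0 s)) (z 0) := by rw [hγ0]
          _ ≤ r * (r ^ n * D) := mul_le_mul_of_nonneg_left this hrpos.le
          _ = r ^ (n+1) * D := by ring
        · -- ε i0 = 1 : ztau i0 0 = 1
          have hτ0 : ztau x ε i0 (0:ℝ) = 1 := by
            have := htau_b i0
            rwa [hb, show ((i0:ℕ)) = 0 from rfl, hx0] at this
          rw [hτ0] at hkey habs
          rw [abs_le] at habs
          have := (ih _ hτmem.1 hτmem.2).2 (by linarith [habs.1])
          calc dist (γ s) (z 0) = dist (γ s) (γ 0) := by rw [hγ0]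
          _ ≤ r * dist (γ (ztau x ε i0 s)) (γ 1) := hkey
          _ = r * dist (γ (ztau x ε i0 s)) (z m) := by rw [hγ1]
          _ ≤ r * (r ^ n * D) := mul_le_mul_of_nonneg_left this hrpos.le
          _ = r ^ (n+1) * D := by ring
      · intro hsd
        have hilv : (il:ℕ) = m - 1 := rfl
        have hil1' : (il:ℕ) + 1 = m := hil1
        have hxm1 : δ ≤ 1 - x (m-1) := by
          have := hδlen (m-1) (by omega)
          rw [show m - 1 + 1 = m by omega, hxm] at this
          linarith
        have hs_ge : x (il:ℕ) ≤ s := by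
          rw [hilv]; linarith [le_trans (hδpowδ n) hxm1, hsd]
        have hs_le : s ≤ x ((il:ℕ)+1) := by rw [hil1', hxm]; exact hs1
        have h1mem : x (il:ℕ) ≤ (1:ℝ) ∧ (1:ℝ) ≤ x ((il:ℕ)+1) := by
          rw [hil1', hxm, hilv]
          exact ⟨(hx01 (m-1) (by omega)).2, le_rfl⟩
        have hkey := hsame il s 1 hs_ge hs_le h1mem.1 h1mem.2
        have habs : |ztau x ε il s - ztau x ε il 1| ≤ δ ^ n := by
          apply htau_diff_le _ _ _ _ (pow_nonneg hδpos.le n)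
          rw [abs_of_nonpos (by linarith : s - 1 ≤ 0)]
          calc -(s - 1) = 1 - s := by ring
          _ ≤ δ ^ (n+1) := by linarith
          _ = δ * δ ^ n := by ring
        have hτmem := htau_mem il s hs_ge hs_le
        rcases hεcase il with ⟨ha, hb⟩ | ⟨ha, hb⟩
        · -- ε il = 0 : ztau il 1 = 1
          have hτ1 : ztau x ε il (1:ℝ) = 1 := by
            have := htau_b il
            rwa [hb, hil1', hxm] at this
          rw [hτ1] at hkey habs
          rw [abs_le] at habs
          have := (ih _ hτmem.1 hτmem.2).2 (by linarith [habs.1])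
          calc dist (γ s) (z m) = dist (γ s) (γ 1) := by rw [hγ1]
          _ ≤ r * dist (γ (ztau x ε il s)) (γ 1) := hkey
          _ = r * dist (γ (ztau x ε il s)) (z m) := by rw [hγ1]
          _ ≤ r * (r ^ n * D) := mul_le_mul_of_nonneg_left this hrpos.le
          _ = r ^ (n+1) * D := by ring
        · -- ε il = 1 : ztau il 1 = 0
          have hτ1 : ztau x ε il (1:ℝ) = 0 := by
            have := htau_a il
            rwa [ha, hil1', hxm] at this
          rw [hτ1] at hkey habs
          rw [abs_le] at habs
          have := (ih _ hτmem.1 hτmem.2).1 (by linarith [habs.2])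
          calc dist (γ s) (z m) = dist (γ s) (γ 1) := by rw [hγ1]
          _ ≤ r * dist (γ (ztau x ε il s)) (γ 0) := hkey
          _ = r * dist (γ (ztau x ε il s)) (z 0) := by rw [hγ0]
          _ ≤ r * (r ^ n * D) := mul_le_mul_of_nonneg_left this hrpos.le
          _ = r ^ (n+1) * D := by ring
  -- main modulus estimate M
  have hM : ∀ n : ℕ, ∀ s t : ℝ, 0 ≤ s → s ≤ t → t ≤ 1 → t - s ≤ δ ^ n →
      dist (γ s) (γ t) ≤ 2 * (r ^ n * D) := by
    intro n
    induction n with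
    | zero =>
      intro s t hs hst ht _
      simp only [pow_zero, one_mul]
      have := hDdist _ (hγK s ⟨hs, le_trans hst ht⟩) _ (hγK t ⟨le_trans hs hst, ht⟩)
      linarith [dist_nonneg (x := γ s) (y := γ t), hD0]
    | succ n ih =>
      have ihabs : ∀ a b : ℝ, a ∈ Icc (0:ℝ) 1 → b ∈ Icc (0:ℝ) 1 → |a - b| ≤ δ ^ n →
          dist (γ a) (γ b) ≤ 2 * (r ^ n * D) := by
        intro a b haI hbI hab
        rcases le_total a b with h | h
        · exact ih a b haI.1 h hbI.2 (by rw [abs_sub_comm, abs_of_nonneg (by linarith)] at hab; linarith)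
        · rw [dist_comm]
          exact ih b a hbI.1 h haI.2 (by rw [abs_of_nonneg (by linarith)] at hab; linarith)
      intro s t hs hst ht hd
      have ht0 : 0 ≤ t := le_trans hs hst
      have hs1 : s ≤ 1 := le_trans hst ht
      obtain ⟨h1, h2, h3, h4⟩ := hidx_spec s hs hs1
      set j := zidx m x s with hjdef
      set i : Fin m := ⟨j, h1⟩ with hidef
      have hiv : (i:ℕ) = j := rfl
      by_cases hc : t ≤ x (j+1)
      · -- same interval
        have hxjt : x (i:ℕ) ≤ t := le_trans h2 hst
        have hkey := hsame i s t h2 h3 hxjt hc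
        have habs : |ztau x ε i s - ztau x ε i t| ≤ δ ^ n := by
          apply htau_diff_le _ _ _ _ (pow_nonneg hδpos.le n)
          rw [abs_of_nonpos (by linarith : s - t ≤ 0)]
          calc -(s - t) = t - s := by ring
          _ ≤ δ ^ (n+1) := hd
          _ = δ * δ ^ n := by ring
        have hτs := htau_mem i s h2 h3
        have hτt := htau_mem i t hxjt hc
        calc dist (γ s) (γ t) ≤ r * dist (γ (ztau x ε i s)) (γ (ztau x ε i t)) := hkey
        _ ≤ r * (2 * (r ^ n * D)) :=
            mul_le_mul_of_nonneg_left (ihabs _ _ hτs hτt habs) hrpos.le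
        _ = 2 * (r ^ (n+1) * D) := by ring
      · -- crossing one vertex
        push_neg at hc
        have hj1m : j + 1 < m := by
          rcases eq_or_lt_of_le (show j + 1 ≤ m by omega) with h | h
          · exfalso; rw [h, hxm] at hc; linarith
          · exact h
        set i' : Fin m := ⟨j+1, hj1m⟩ with hi'def
        have hi'v : (i':ℕ) = j + 1 := rfl
        have ht2 : t ≤ x (j+2) := by
          have hlen := hδlen (j+1) hj1m
          have : t ≤ s + δ ^ (n+1) := by linarith
          calc t ≤ s + δ ^ (n+1) := this
          _ ≤ x (j+1) + δ := by linarith [hδpowδ n, h3]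
          _ ≤ x (j+1) + (x (j+2) - x (j+1)) := by linarith [hlen]
          _ = x (j+2) := by ring
        have hxj1 : x (j+1) ≤ 1 := (hx01 (j+1) hj1m.le).2
        have hxj1' : 0 ≤ x (j+1) := (hx01 (j+1) hj1m.le).1
        -- piece 1 : s to x (j+1) in interval i
        have hp1 : dist (γ s) (γ (x (j+1))) ≤ r ^ (n+1) * D := by
          have hkey := hsame i s (x (j+1)) h2 h3 (hxle j (j+1) (by omega) hj1m.le) le_rfl
          have habs : |ztau x ε i s - ztau x ε i (x (j+1))| ≤ δ ^ n := by
            apply htau_diff_le _ _ _ _ (pow_nonneg hδpos.le n)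
            rw [abs_of_nonpos (by linarith : s - x (j+1) ≤ 0)]
            calc -(s - x (j+1)) = x (j+1) - s := by ring
            _ ≤ t - s := by linarith
            _ ≤ δ ^ (n+1) := hd
            _ = δ * δ ^ n := by ring
          have hτs := htau_mem i s h2 h3
          rcases hεcase i with ⟨ha, hb⟩ | ⟨ha, hb⟩
          · have hτ1 : ztau x ε i (x (j+1)) = 1 := by
              have := htau_b i; rwa [hb, hiv] at this
            rw [hτ1] at hkey habs
            rw [abs_le] at habs
            have := (hE n _ hτs.1 hτs.2).2 (by linarith [habs.1])
            calc dist (γ s) (γ (x (j+1))) ≤ r * dist (γ (ztau x ε i s)) (γ 1) := hkey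
            _ = r * dist (γ (ztau x ε i s)) (z m) := by rw [hγ1]
            _ ≤ r * (r ^ n * D) := mul_le_mul_of_nonneg_left this hrpos.le
            _ = r ^ (n+1) * D := by ring
          · have hτ1 : ztau x ε i (x (j+1)) = 0 := by
              have := htau_a i; rwa [ha, hiv] at this
            rw [hτ1] at hkey habs
            rw [abs_le] at habs
            have := (hE n _ hτs.1 hτs.2).1 (by linarith [habs.2])
            calc dist (γ s) (γ (x (j+1))) ≤ r * dist (γ (ztau x ε i s)) (γ 0) := hkey
            _ = r * dist (γ (ztau x ε i s)) (z 0) := by rw [hγ0]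
            _ ≤ r * (r ^ n * D) := mul_le_mul_of_nonneg_left this hrpos.le
            _ = r ^ (n+1) * D := by ring
        -- piece 2 : x (j+1) to t in interval i'
        have hp2 : dist (γ (x (j+1))) (γ t) ≤ r ^ (n+1) * D := by
          have hkey := hsame i' (x (j+1)) t le_rfl
            (hxle (j+1) (j+2) (by omega) (by omega)) hc.le ht2
          have habs : |ztau x ε i' (x (j+1)) - ztau x ε i' t| ≤ δ ^ n := by
            apply htau_diff_le _ _ _ _ (pow_nonneg hδpos.le n)
            rw [abs_of_nonpos (by linarith : x (j+1) - t ≤ 0)]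
            calc -(x (j+1) - t) = t - x (j+1) := by ring
            _ ≤ t - s := by linarith
            _ ≤ δ ^ (n+1) := hd
            _ = δ * δ ^ n := by ring
          have hτt := htau_mem i' t (le_of_lt hc) ht2
          rcases hεcase i' with ⟨ha, hb⟩ | ⟨ha, hb⟩
          · have hτ1 : ztau x ε i' (x (j+1)) = 0 := by
              have := htau_a i'; rwa [ha, hi'v] at this
            rw [hτ1] at hkey habs
            rw [abs_le] at habs
            have := (hE n _ hτt.1 hτt.2).1 (by linarith [habs.1, habs.2])
            calc dist (γ (x (j+1))) (γ t) ≤ r * dist (γ 0) (γ (ztau x ε i' t)) := hkey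
            _ = r * dist (γ (ztau x ε i' t)) (z 0) := by rw [hγ0, dist_comm]
            _ ≤ r * (r ^ n * D) := mul_le_mul_of_nonneg_left this hrpos.le
            _ = r ^ (n+1) * D := by ring
          · have hτ1 : ztau x ε i' (x (j+1)) = 1 := by
              have := htau_b i'; rwa [hb, hi'v] at this
            rw [hτ1] at hkey habs
            rw [abs_le] at habs
            have := (hE n _ hτt.1 hτt.2).2 (by linarith [habs.1, habs.2])
            calc dist (γ (x (j+1))) (γ t) ≤ r * dist (γ 1) (γ (ztau x ε i' t)) := hkey
            _ = r * dist (γ (ztau x ε i' t)) (z m) := by rw [hγ1, dist_comm]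
            _ ≤ r * (r ^ n * D) := mul_le_mul_of_nonneg_left this hrpos.le
            _ = r ^ (n+1) * D := by ring
        calc dist (γ s) (γ t) ≤ dist (γ s) (γ (x (j+1))) + dist (γ (x (j+1))) (γ t) :=
              dist_triangle _ _ _
        _ ≤ r ^ (n+1) * D + r ^ (n+1) * D := add_le_add hp1 hp2
        _ = 2 * (r ^ (n+1) * D) := by ring
  have hMabs : ∀ n : ℕ, ∀ a ∈ Icc (0:ℝ) 1, ∀ b ∈ Icc (0:ℝ) 1, |a - b| ≤ δ ^ n →
      dist (γ a) (γ b) ≤ 2 * (r ^ n * D) := by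
    intro n a haI b hbI hab
    rcases le_total a b with h | h
    · exact hM n a b haI.1 h hbI.2
        (by rw [abs_sub_comm, abs_of_nonneg (by linarith)] at hab; linarith)
    · rw [dist_comm]
      exact hM n b a hbI.1 h haI.2 (by rw [abs_of_nonneg (by linarith)] at hab; linarith)
  -- Hölder exponent
  set α : ℝ := Real.logb δ r with hαdef
  have hlogr : Real.log r < 0 := Real.log_neg hrpos hr1
  have hlogδ : Real.log δ < 0 := Real.log_neg hδpos hδ1
  have hαpos : 0 < α := by
    rw [hαdef, Real.logb]
    exact div_pos_of_neg_of_neg hlogr hlogδ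
  have hδα : δ ^ α = r := Real.rpow_logb hδpos (ne_of_lt hδ1) hrpos
  have hpow : ∀ n : ℕ, (δ ^ n) ^ α = r ^ n := by
    intro n
    rw [← Real.rpow_natCast δ n, ← Real.rpow_natCast r n, ← hδα,
      ← Real.rpow_mul hδpos.le, ← Real.rpow_mul hδpos.le, mul_comm]
  have hδαpos : 0 < δ ^ α := Real.rpow_pos_of_pos hδpos α
  have hHold : ∀ s ∈ Icc (0:ℝ) 1, ∀ t ∈ Icc (0:ℝ) 1,
      dist (γ s) (γ t) ≤ (2 * D / δ ^ α) * |s - t| ^ α := by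
    intro s hs t ht
    rcases eq_or_ne s t with he | hne
    · rw [he]
      simp [Real.zero_rpow hαpos.ne']
    · have h0 : 0 < |s - t| := abs_pos.2 (sub_ne_zero.2 hne)
      have h1 : |s - t| ≤ 1 := by
        rw [abs_le]; constructor <;> linarith [hs.1, hs.2, ht.1, ht.2]
      set A : Set ℕ := {n | |s - t| ≤ δ ^ n} with hA
      have h0A : 0 ∈ A := by simpa [hA] using h1
      obtain ⟨N, hN⟩ : ∃ N : ℕ, δ ^ N < |s - t| := exists_pow_lt_of_lt_one h0 hδ1
      have hbddA : BddAbove A := by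
        refine ⟨N, fun k hk => ?_⟩
        by_contra hkN
        push_neg at hkN
        have hkk : δ ^ k ≤ δ ^ N := pow_le_pow_of_le_one hδpos.le hδ1.le hkN.le
        exact absurd hk (by simp only [hA, mem_setOf_eq]; push_neg; linarith)
      set n := sSup A with hn
      have hnmem : n ∈ A := Nat.sSup_mem ⟨0, h0A⟩ hbddA
      have hmemle : |s - t| ≤ δ ^ n := hnmem
      have hnot : δ ^ (n+1) < |s - t| := by
        by_contra hcon2
        push_neg at hcon2
        have : n + 1 ≤ n := le_csSup hbddA hcon2
        omega
      have hstep : δ ^ n < |s - t| / δ := by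
        rw [lt_div_iff₀ hδpos]
        calc δ ^ n * δ = δ ^ (n+1) := by ring
        _ < |s - t| := hnot
      calc dist (γ s) (γ t) ≤ 2 * (r ^ n * D) := hMabs n s hs t ht hmemle
      _ = 2 * D * (δ ^ n) ^ α := by rw [hpow]; ring
      _ ≤ 2 * D * (|s - t| / δ) ^ α := by
          apply mul_le_mul_of_nonneg_left _ (by linarith [hD0])
          exact Real.rpow_le_rpow (pow_nonneg hδpos.le n) hstep.le hαpos.le
      _ = 2 * D * (|s - t| ^ α / δ ^ α) := by
          rw [Real.div_rpow (abs_nonneg _) hδpos.le]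
      _ = (2 * D / δ ^ α) * |s - t| ^ α := by ring
  have hCnn : 0 ≤ 2 * D / δ ^ α := by positivity
  have hHolder : HolderOnWith (2 * D / δ ^ α).toNNReal α.toNNReal γ (Icc 0 1) := by
    intro s hs t ht
    have hcoe : ((α.toNNReal : NNReal) : ℝ) = α := Real.coe_toNNReal _ hαpos.le
    rw [hcoe, edist_dist, edist_dist, Real.dist_eq]
    calc ENNReal.ofReal (dist (γ s) (γ t))
        ≤ ENNReal.ofReal ((2 * D / δ ^ α) * |s - t| ^ α) :=
          ENNReal.ofReal_le_ofReal (hHold s hs t ht)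
    _ = ENNReal.ofReal (2 * D / δ ^ α) * ENNReal.ofReal (|s - t| ^ α) :=
          ENNReal.ofReal_mul hCnn
    _ = ↑(2 * D / δ ^ α).toNNReal * ENNReal.ofReal (|s - t|) ^ α := by
          rw [ENNReal.ofReal_rpow_of_nonneg (abs_nonneg _) hαpos.le]
          rfl
  have hρpos : 0 < α.toNNReal := Real.toNNReal_pos.2 hαpos
  have hcont : ContinuousOn γ (Icc 0 1) := hHolder.continuousOn hρpos
  refine ⟨γ, ⟨hcont, fun s hs => hγK s hs, hγx, hfuneq⟩, ?_, ⟨_, _, hρpos, hHolder⟩⟩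
  rintro γ' ⟨hc', hK', hx', hf'⟩ s hs
  have hbound : ∀ n : ℕ, ∀ u ∈ Icc (0:ℝ) 1, dist (γ u) (γ' u) ≤ r ^ n * D := by
    intro n
    induction n with
    | zero => intro u hu; simpa using hDdist _ (hγK u hu) _ (hK' hu)
    | succ n ih =>
      intro u hu
      obtain ⟨h1, h2, h3, _⟩ := hidx_spec u hu.1 hu.2
      set i : Fin m := ⟨zidx m x u, h1⟩
      have hτ := htau_mem i u h2 h3
      have e1 : γ u = S i (γ (ztau x ε i u)) := by
        rw [hfuneq i _ hτ, hzipT_tau]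
      have e2 : γ' u = S i (γ' (ztau x ε i u)) := by
        rw [hf' i _ hτ, hzipT_tau]
      rw [e1, e2]
      calc dist (S i (γ (ztau x ε i u))) (S i (γ' (ztau x ε i u)))
          ≤ r * dist (γ (ztau x ε i u)) (γ' (ztau x ε i u)) := hdistS _ _ _
      _ ≤ r * (r ^ n * D) := mul_le_mul_of_nonneg_left (ih _ hτ) hrpos.le
      _ = r ^ (n+1) * D := by ring
  have hzero : dist (γ s) (γ' s) ≤ 0 := by
    have hlim : Tendsto (fun n : ℕ => r ^ n * D) atTop (𝓝 0) := by
      simpa using (tendsto_pow_atTop_nhds_zero_of_lt_one hrpos.le hr1).mul_const D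
    exact ge_of_tendsto' hlim (fun n => hbound n s hs)
  exact dist_le_zero.1 hzero
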